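/- With S(x₁,x₂) as in the (2,2)-periodic Schrödinger symbol with potential c_{ij} = (−1)^{i+j}c, the eigenvalues of S(x₁,x₂) are ±√(c² + (|τ(x₂)| + |τ(x₁)|)²) and ±√(c² + (|τ(x₂)| − |τ(x₁)|)²). In particular the set {λ ∈ ℝ : ∃(x₁,x₂) ∈ [0,2π)², λ is an eigenvalue of S(x₁,x₂)} equals [−√(c²+16), −c] ∪ [c, √(c²+16)]. -/

import Mathlib

open Matrix Real

noncomputable section

/-- `τ(x) = 1 + e^{ix}`. -/
def tau (x : ℝ) : ℂ := 1 + Complex.exp (x * Complex.I)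

/-- The symbol of the (2,2)-periodic discrete Schrödinger operator with potential
`c_{ij} = (−1)^{i+j} c`. -/
def symb (c x₁ x₂ : ℝ) : Matrix (Fin 2 ⊕ Fin 2) (Fin 2 ⊕ Fin 2) ℂ :=
  Matrix.fromBlocks
    !![(c : ℂ), tau x₂; tau (-x₂), (-c : ℂ)]
    (tau x₁ • (1 : Matrix (Fin 2) (Fin 2) ℂ))
    (tau (-x₁) • (1 : Matrix (Fin 2) (Fin 2) ℂ))
    !![(-c : ℂ), tau x₂; tau (-x₂), (c : ℂ)]

lemma tau_neg (x : ℝ) : tau (-x) = starRingEnd ℂ (tau x) := by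
  simp only [tau]
  rw [map_add, _root_.map_one, ← Complex.exp_conj]
  congr 2
  simp only [_root_.map_mul, Complex.conj_I, Complex.conj_ofReal]
  push_cast
  ring

lemma tau_mul (x : ℝ) : tau x * tau (-x) = ((‖tau x‖ : ℂ))^2 := by
  rw [tau_neg, Complex.mul_conj]
  norm_cast
  exact (Complex.sq_norm _).symm

lemma abs_tau_le (x : ℝ) : ‖tau x‖ ≤ 2 := by
  calc ‖tau x‖ ≤ ‖(1:ℂ)‖ + ‖Complex.exp (x * Complex.I)‖ :=
        norm_add_le _ _
    _ ≤ 2 := by simp [Complex.norm_exp_ofReal_mul_I]; norm_num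

lemma exists_tau {a : ℝ} (h0 : 0 ≤ a) (h2 : a ≤ 2) :
    ∃ x ∈ Set.Ico (0 : ℝ) (2 * π), ‖tau x‖ = a := by
  refine ⟨2 * Real.arccos (a / 2), ⟨by have := Real.arccos_nonneg (a/2); linarith, ?_⟩, ?_⟩
  · have := Real.arccos_le_pi (a / 2)
    have hπ : 0 < π := Real.pi_pos
    have hlt : Real.arccos (a / 2) < π := by
      refine lt_of_le_of_ne this ?_
      intro h
      have := Real.cos_arccos (by linarith : (-1:ℝ) ≤ a/2) (by linarith : a/2 ≤ 1)
      rw [h, Real.cos_pi] at this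
      linarith
    linarith
  · have hcos : Real.cos (Real.arccos (a/2)) = a/2 :=
      Real.cos_arccos (by linarith) (by linarith)
    have htau : tau (2 * Real.arccos (a/2)) =
        Complex.ofReal (1 + Real.cos (2 * Real.arccos (a/2))) +
          Complex.ofReal (Real.sin (2 * Real.arccos (a/2))) * Complex.I := by
      rw [tau, Complex.exp_mul_I]
      push_cast [Complex.ofReal_cos, Complex.ofReal_sin]
      ring
    rw [htau, Complex.norm_add_mul_I]
    have hc2 : Real.cos (2 * Real.arccos (a/2)) = 2 * (a/2)^2 - 1 := by
      rw [Real.cos_two_mul, hcos]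
    have hs : (1 + Real.cos (2 * Real.arccos (a/2)))^2 + (Real.sin (2 * Real.arccos (a/2)))^2
        = a^2 := by
      have := Real.sin_sq_add_cos_sq (2 * Real.arccos (a/2))
      nlinarith
    rw [hs, Real.sqrt_sq h0]

lemma mem_spec (M : Matrix (Fin 2 ⊕ Fin 2) (Fin 2 ⊕ Fin 2) ℂ) (lam : ℂ) :
    lam ∈ spectrum ℂ M ↔ (lam • (1 : Matrix (Fin 2 ⊕ Fin 2) (Fin 2 ⊕ Fin 2) ℂ) - M).det = 0 := by
  rw [spectrum.mem_iff, Matrix.isUnit_iff_isUnit_det, isUnit_iff_ne_zero, not_not,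
    Algebra.algebraMap_eq_smul_one]

lemma fse0 : (finSumFinEquiv.symm : Fin (2+2) → Fin 2 ⊕ Fin 2) 0 = Sum.inl 0 := rfl
lemma fse1 : (finSumFinEquiv.symm : Fin (2+2) → Fin 2 ⊕ Fin 2) 1 = Sum.inl 1 := rfl
lemma fse2 : (finSumFinEquiv.symm : Fin (2+2) → Fin 2 ⊕ Fin 2) 2 = Sum.inr 0 := rfl
lemma fse3 : (finSumFinEquiv.symm : Fin (2+2) → Fin 2 ⊕ Fin 2) 3 = Sum.inr 1 := rfl

lemma det_eq (c x₁ x₂ : ℝ) (lam : ℂ) :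
    (lam • (1 : Matrix (Fin 2 ⊕ Fin 2) (Fin 2 ⊕ Fin 2) ℂ) - symb c x₁ x₂).det =
      (lam^2 - (c^2 + ((‖tau x₂‖ : ℂ) + ‖tau x₁‖)^2)) *
      (lam^2 - (c^2 + ((‖tau x₂‖ : ℂ) - ‖tau x₁‖)^2)) := by
  have h1 := tau_mul x₁
  have h2 := tau_mul x₂
  rw [← Matrix.det_submatrix_equiv_self finSumFinEquiv.symm]
  have hM : (lam • (1 : Matrix (Fin 2 ⊕ Fin 2) (Fin 2 ⊕ Fin 2) ℂ) - symb c x₁ x₂).submatrix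
      finSumFinEquiv.symm finSumFinEquiv.symm =
      !![lam - c, -tau x₂, -tau x₁, 0;
         -tau (-x₂), lam + c, 0, -tau x₁;
         -tau (-x₁), 0, lam + c, -tau x₂;
         0, -tau (-x₁), -tau (-x₂), lam - c] := by
    ext i j
    fin_cases i <;> fin_cases j <;>
      simp [symb, fse0, fse1, fse2, fse3, Matrix.one_apply]
  rw [hM]
  simp [Matrix.det_succ_row_zero, Fin.sum_univ_succ,
    show Fin.succAbove (1:Fin 4) 2 = 3 from rfl, show Fin.succAbove (2:Fin 4) 2 = 3 from rfl]
  linear_combination ((-2)*(lam^2 - (c:ℂ)^2) - (tau x₂ * tau (-x₂) - tau x₁ * tau (-x₁)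
      + ((‖tau x₂‖:ℂ))^2 - ((‖tau x₁‖:ℂ))^2)) * h1 +
    ((-2)*(lam^2 - (c:ℂ)^2) + (tau x₂ * tau (-x₂) - tau x₁ * tau (-x₁)
      + ((‖tau x₂‖:ℂ))^2 - ((‖tau x₁‖:ℂ))^2)) * h2

lemma spec_eq (c x₁ x₂ : ℝ) :
    spectrum ℂ (symb c x₁ x₂) =
      {((Real.sqrt (c ^ 2 + (‖tau x₂‖ + ‖tau x₁‖) ^ 2) : ℝ) : ℂ),
       ((Real.sqrt (c ^ 2 + (‖tau x₂‖ - ‖tau x₁‖) ^ 2) : ℝ) : ℂ),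
       ((-Real.sqrt (c ^ 2 + (‖tau x₂‖ - ‖tau x₁‖) ^ 2) : ℝ) : ℂ),
       ((-Real.sqrt (c ^ 2 + (‖tau x₂‖ + ‖tau x₁‖) ^ 2) : ℝ) : ℂ)} := by
  set a₁ := ‖tau x₁‖ with ha₁
  set a₂ := ‖tau x₂‖ with ha₂
  set r : ℝ := Real.sqrt (c ^ 2 + (a₂ + a₁) ^ 2) with hr
  set s : ℝ := Real.sqrt (c ^ 2 + (a₂ - a₁) ^ 2) with hs
  have hr2 : ((r : ℂ))^2 = (c:ℂ)^2 + ((a₂:ℂ) + a₁)^2 := by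
    have h : r^2 = c^2 + (a₂ + a₁)^2 := Real.sq_sqrt (by positivity)
    calc ((r : ℂ))^2 = ((r^2 : ℝ) : ℂ) := by push_cast; ring
      _ = _ := by rw [h]; push_cast; ring
  have hs2 : ((s : ℂ))^2 = (c:ℂ)^2 + ((a₂:ℂ) - a₁)^2 := by
    have h : s^2 = c^2 + (a₂ - a₁)^2 := Real.sq_sqrt (by positivity)
    calc ((s : ℂ))^2 = ((s^2 : ℝ) : ℂ) := by push_cast; ring
      _ = _ := by rw [h]; push_cast; ring
  ext lam
  rw [mem_spec, det_eq]
  have key : (lam^2 - ((c:ℂ)^2 + ((a₂:ℂ) + a₁)^2)) * (lam^2 - ((c:ℂ)^2 + ((a₂:ℂ) - a₁)^2))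
      = (lam - r) * (lam + r) * ((lam - s) * (lam + s)) := by
    rw [← hr2, ← hs2]; ring
  rw [key]
  simp only [mul_eq_zero, sub_eq_zero, add_eq_zero_iff_eq_neg, Set.mem_insert_iff,
    Set.mem_singleton_iff]
  push_cast
  tauto

lemma sqrt_bounds {c d : ℝ} (hc : 0 < c) (hd : d^2 ≤ 16) :
    c ≤ Real.sqrt (c^2 + d^2) ∧ Real.sqrt (c^2 + d^2) ≤ Real.sqrt (c^2 + 16) := by
  constructor
  · have h := Real.sqrt_le_sqrt (show c^2 ≤ c^2 + d^2 by nlinarith [sq_nonneg d])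
    rwa [Real.sqrt_sq hc.le] at h
  · exact Real.sqrt_le_sqrt (by nlinarith)

/-- The eigenvalues of the symbol are `±√(c² + (|τ(x₂)| ± |τ(x₁)|)²)`, and the set of
all eigenvalues over the torus is `[−√(c²+16), −c] ∪ [c, √(c²+16)]`. -/
theorem spectrum_symb (c : ℝ) (hc : 0 < c) :
    (∀ x₁ x₂ : ℝ,
      spectrum ℂ (symb c x₁ x₂) =
        {((Real.sqrt (c ^ 2 + (‖tau x₂‖ + ‖tau x₁‖) ^ 2) : ℝ) : ℂ),
         ((Real.sqrt (c ^ 2 + (‖tau x₂‖ - ‖tau x₁‖) ^ 2) : ℝ) : ℂ),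
         ((-Real.sqrt (c ^ 2 + (‖tau x₂‖ - ‖tau x₁‖) ^ 2) : ℝ) : ℂ),
         ((-Real.sqrt (c ^ 2 + (‖tau x₂‖ + ‖tau x₁‖) ^ 2) : ℝ) : ℂ)}) ∧
    {lam : ℝ | ∃ x₁ ∈ Set.Ico (0 : ℝ) (2 * π), ∃ x₂ ∈ Set.Ico (0 : ℝ) (2 * π),
        ((lam : ℂ) ∈ spectrum ℂ (symb c x₁ x₂))} =
      Set.Icc (-Real.sqrt (c ^ 2 + 16)) (-c) ∪ Set.Icc c (Real.sqrt (c ^ 2 + 16)) := by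
  refine ⟨fun x₁ x₂ => spec_eq c x₁ x₂, ?_⟩
  ext lam
  simp only [Set.mem_setOf_eq, Set.mem_union, Set.mem_Icc]
  constructor
  · rintro ⟨x₁, hx₁, x₂, hx₂, hmem⟩
    rw [spec_eq] at hmem
    set a₁ := ‖tau x₁‖ with ha₁
    set a₂ := ‖tau x₂‖ with ha₂
    have h10 : 0 ≤ a₁ := norm_nonneg _
    have h20 : 0 ≤ a₂ := norm_nonneg _
    have h12 : a₁ ≤ 2 := abs_tau_le x₁
    have h22 : a₂ ≤ 2 := abs_tau_le x₂
    have hsum : (a₂ + a₁)^2 ≤ 16 := by nlinarith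
    have hdiff : (a₂ - a₁)^2 ≤ 16 := by nlinarith
    have hbr := sqrt_bounds hc hsum
    have hbs := sqrt_bounds hc hdiff
    simp only [Set.mem_insert_iff, Set.mem_singleton_iff] at hmem
    rcases hmem with h | h | h | h <;>
      [ (have : lam = Real.sqrt (c^2 + (a₂+a₁)^2) := by exact_mod_cast h);
        (have : lam = Real.sqrt (c^2 + (a₂-a₁)^2) := by exact_mod_cast h);
        (have : lam = -Real.sqrt (c^2 + (a₂-a₁)^2) := by exact_mod_cast h);
        (have : lam = -Real.sqrt (c^2 + (a₂+a₁)^2) := by exact_mod_cast h)]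
    · exact Or.inr ⟨this ▸ hbr.1, this ▸ hbr.2⟩
    · exact Or.inr ⟨this ▸ hbs.1, this ▸ hbs.2⟩
    · exact Or.inl ⟨by rw [this]; linarith [hbs.2], by rw [this]; linarith [hbs.1]⟩
    · exact Or.inl ⟨by rw [this]; linarith [hbr.2], by rw [this]; linarith [hbr.1]⟩
  · intro h
    -- reduce to nonnegative case via |lam|
    have main : ∀ μ : ℝ, c ≤ μ → μ ≤ Real.sqrt (c^2 + 16) →
        ∃ x₁ ∈ Set.Ico (0 : ℝ) (2 * π), ∃ x₂ ∈ Set.Ico (0 : ℝ) (2 * π),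
          μ = Real.sqrt (c^2 + (‖tau x₂‖ + ‖tau x₁‖)^2) := by
      intro μ h1 h2
      have hμ0 : 0 ≤ μ := le_trans hc.le h1
      have hμsq : μ^2 ≤ c^2 + 16 := by
        have := Real.sq_sqrt (show (0:ℝ) ≤ c^2 + 16 by positivity)
        nlinarith [Real.sqrt_nonneg (c^2+16)]
      have hcsq : c^2 ≤ μ^2 := by nlinarith
      set d := Real.sqrt (μ^2 - c^2) with hd
      have hd0 : 0 ≤ d := Real.sqrt_nonneg _
      have hd4 : d ≤ 4 := by
        rw [hd, show (4:ℝ) = Real.sqrt 16 by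
          rw [show (16:ℝ) = 4^2 by norm_num, Real.sqrt_sq]; norm_num]
        exact Real.sqrt_le_sqrt (by linarith)
      have hdsq : d^2 = μ^2 - c^2 := Real.sq_sqrt (by linarith)
      set a₂ := min d 2 with ha₂
      set a₁ := d - a₂ with ha₁
      have h20 : 0 ≤ a₂ := le_min hd0 (by norm_num)
      have h22 : a₂ ≤ 2 := min_le_right _ _
      have h10 : 0 ≤ a₁ := by
        rw [ha₁, ha₂]
        rcases le_total d 2 with h' | h' <;> simp [min_eq_left, min_eq_right, h'] <;> linarith
      have h12 : a₁ ≤ 2 := by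
        rw [ha₁, ha₂]
        rcases le_total d 2 with h' | h' <;> simp [min_eq_left, min_eq_right, h'] <;> linarith
      obtain ⟨x₂, hx₂, hax₂⟩ := exists_tau h20 h22
      obtain ⟨x₁, hx₁, hax₁⟩ := exists_tau h10 h12
      refine ⟨x₁, hx₁, x₂, hx₂, ?_⟩
      rw [hax₁, hax₂]
      have hsum : a₂ + a₁ = d := by rw [ha₁]; ring
      rw [hsum, hdsq, show c^2 + (μ^2 - c^2) = μ^2 by ring, Real.sqrt_sq hμ0]
    rcases h with ⟨h1, h2⟩ | ⟨h1, h2⟩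
    · obtain ⟨x₁, hx₁, x₂, hx₂, heq⟩ := main (-lam) (by linarith) (by linarith)
      refine ⟨x₁, hx₁, x₂, hx₂, ?_⟩
      rw [spec_eq]
      simp only [Set.mem_insert_iff, Set.mem_singleton_iff]
      right; right; right
      exact congrArg Complex.ofReal
        (show lam = -Real.sqrt (c^2 + (‖tau x₂‖ + ‖tau x₁‖)^2) by
          linarith [heq])
    · obtain ⟨x₁, hx₁, x₂, hx₂, heq⟩ := main lam h1 h2
      refine ⟨x₁, hx₁, x₂, hx₂, ?_⟩
      rw [spec_eq]
      simp only [Set.mem_insert_iff, Set.mem_singleton_iff]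
      left
      exact congrArg Complex.ofReal heq

end
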